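/- Let r ≥ 2, let 0 < α < r^{-8}/8, set ε = √(2α), and let G be a graph of order n with e(G) ≥ (1 − 1/r − α)n²/2. Let M' be a set of exactly ⌊εn⌋ vertices of G each of degree at most (1 − 1/r − ε)n, and let G' be the subgraph of G induced by the complement of M'. If e(G') ≤ ((r−1)/(2r))(n − |M'|)², then we reach a contradiction; that is, if every vertex of M' has degree at most (1 − 1/r − ε)n in G, then e(G') > ((r−1)/(2r))(n − |M'|)² cannot fail, i.e., e(G \ M') > ((r−1)/(2r))(n − ⌊εn⌋)². -/

import Mathlib

open Real SimpleGraph Finset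

/-- Let `r ≥ 2`, `0 < α < r^{-8}/8`, `ε = √(2α)` with `εn > 1`, and `G` a graph of order
`n` with `e(G) ≥ (1 - 1/r - α)n²/2`. If `M'` is a set of exactly `⌊εn⌋` vertices of `G`,
each of degree at most `(1 - 1/r - ε)n`, then the graph `G'` induced on the complement of
`M'` satisfies `e(G') > ((r-1)/(2r))·(n - ⌊εn⌋)²`. -/
theorem removed_small_degree_vertices_dense {V : Type*} [Fintype V] [DecidableEq V]
    (G : SimpleGraph V) [DecidableRel G.Adj] (r n : ℕ) (α : ℝ)
    (hr : 2 ≤ r) (hn : Fintype.card V = n)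
    (hα0 : 0 < α) (hα1 : α < ((r : ℝ) ^ 8)⁻¹ / 8)
    (hεn : Real.sqrt (2 * α) * n > 1)
    (he : (G.edgeFinset.card : ℝ) ≥ (1 - 1 / (r : ℝ) - α) * n ^ 2 / 2)
    (M' : Finset V) (hM'card : M'.card = ⌊Real.sqrt (2 * α) * n⌋₊)
    (hM'deg : ∀ u ∈ M', (G.degree u : ℝ) ≤ (1 - 1 / (r : ℝ) - Real.sqrt (2 * α)) * n) :
    ((G.edgeFinset.filter fun e => ∀ v ∈ M', v ∉ e).card : ℝ) >
      ((r : ℝ) - 1) / (2 * r) * ((n : ℝ) - M'.card) ^ 2 := by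
  classical
  set ε : ℝ := Real.sqrt (2 * α) with hεdef
  have hε0 : 0 < ε := Real.sqrt_pos.2 (by linarith)
  have hε2 : ε ^ 2 = 2 * α := Real.sq_sqrt (by linarith)
  have hεn0 : (0:ℝ) ≤ ε * n := by positivity
  -- facts about m = |M'|
  have hm_le : (M'.card : ℝ) ≤ ε * n := by
    rw [hM'card]; exact Nat.floor_le hεn0
  have hm_gt : ε * n < (M'.card : ℝ) + 1 := by
    rw [hM'card]; exact_mod_cast Nat.lt_floor_add_one (ε * n)
  have hm1 : (1:ℝ) ≤ (M'.card : ℝ) := by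
    rw [hM'card]
    exact_mod_cast Nat.le_floor (by exact_mod_cast hεn.le)
  have hmhalf : ε * n ≤ 2 * (M'.card : ℝ) := by
    rcases le_or_gt (ε * n) 2 with h | h
    · linarith
    · linarith
  -- counting: edges meeting M' are at most the sum of degrees over M'
  have hsub : G.edgeFinset.filter (fun e => ¬ ∀ v ∈ M', v ∉ e) ⊆
      M'.biUnion (fun u => G.incidenceFinset u) := by
    intro e he'
    simp only [Finset.mem_filter] at he'
    obtain ⟨heE, hne⟩ := he'
    push_neg at hne
    obtain ⟨v, hvM, hve⟩ := hne
    refine Finset.mem_biUnion.2 ⟨v, hvM, ?_⟩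
    rw [SimpleGraph.mem_incidenceFinset]
    exact ⟨SimpleGraph.mem_edgeFinset.1 heE, hve⟩
  have hcard2 : (G.edgeFinset.filter (fun e => ¬ ∀ v ∈ M', v ∉ e)).card ≤
      ∑ u ∈ M', G.degree u := by
    calc _ ≤ (M'.biUnion (fun u => G.incidenceFinset u)).card := Finset.card_le_card hsub
    _ ≤ ∑ u ∈ M', (G.incidenceFinset u).card := Finset.card_biUnion_le
    _ = ∑ u ∈ M', G.degree u := by
        refine Finset.sum_congr rfl fun u _ => ?_
        exact G.card_incidenceFinset_eq_degree u
  have hsplit : (G.edgeFinset.filter (fun e => ∀ v ∈ M', v ∉ e)).card +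
      (G.edgeFinset.filter (fun e => ¬ ∀ v ∈ M', v ∉ e)).card = G.edgeFinset.card :=
    Finset.card_filter_add_card_filter_not _
  have hdegsum : (∑ u ∈ M', (G.degree u : ℝ)) ≤ (M'.card : ℝ) * ((1 - 1 / (r:ℝ) - ε) * n) := by
    calc (∑ u ∈ M', (G.degree u : ℝ)) ≤ ∑ u ∈ M', (1 - 1 / (r:ℝ) - ε) * n :=
          Finset.sum_le_sum fun u hu => hM'deg u hu
    _ = (M'.card : ℝ) * ((1 - 1 / (r:ℝ) - ε) * n) := by
        rw [Finset.sum_const, nsmul_eq_mul]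
  have hX : ((G.edgeFinset.filter (fun e => ∀ v ∈ M', v ∉ e)).card : ℝ) ≥
      (G.edgeFinset.card : ℝ) - (M'.card : ℝ) * ((1 - 1 / (r:ℝ) - ε) * n) := by
    have h1 : ((G.edgeFinset.filter (fun e => ¬ ∀ v ∈ M', v ∉ e)).card : ℝ) ≤
        ∑ u ∈ M', (G.degree u : ℝ) := by
      push_cast
      exact_mod_cast hcard2
    have h2 : ((G.edgeFinset.filter (fun e => ∀ v ∈ M', v ∉ e)).card : ℝ) +
        ((G.edgeFinset.filter (fun e => ¬ ∀ v ∈ M', v ∉ e)).card : ℝ) =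
        (G.edgeFinset.card : ℝ) := by exact_mod_cast hsplit
    linarith
  -- numeric conclusion
  have hr2 : (2:ℝ) ≤ (r:ℝ) := by exact_mod_cast hr
  have hrpos : (0:ℝ) < (r:ℝ) := by linarith
  have hfrac : ((r:ℝ) - 1) / (2 * r) = (1 - 1 / (r:ℝ)) / 2 := by
    field_simp
  rw [hfrac]
  set m : ℝ := (M'.card : ℝ)
  set X : ℝ := ((G.edgeFinset.filter (fun e => ∀ v ∈ M', v ∉ e)).card : ℝ)
  have ht0 : 0 < 1 / (r:ℝ) := by positivity
  have hmεn : m ^ 2 ≤ m * (ε * n) := by nlinarith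
  nlinarith [mul_pos (mul_pos ht0 (by linarith : (0:ℝ) < m)) (by linarith : (0:ℝ) < m),
    mul_nonneg (by linarith : (0:ℝ) ≤ 2*m - ε*n) hεn0]
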